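/- Let φ be an HML formula (in negation normal form) and let p1, p2 be processes with p1 ⊨ φ and p2 ⊨ φ. If every two processes satisfying φ are simulation equivalent (i.e., for all p, q: p ⊨ φ and q ⊨ φ imply p ≡_S q), then depth(p1) = depth(p2) ≤ md(φ). -/
import Mathlib


/-- Finite, loop-free CCS processes over the action set `Act`:
`p ::= 0 | a.p | p + p`. -/
inductive Proc (Act : Type) : Type
  | nil : Proc Act
  | pre : Act → Proc Act → Proc Act
  | plus : Proc Act → Proc Act → Proc Act

/-- The transition relation: `a.p —a→ p`, and `p₁ + p₂ —a→ p'` iff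
`p₁ —a→ p'` or `p₂ —a→ p'`. -/
inductive Step {Act : Type} : Proc Act → Act → Proc Act → Prop
  | pre (a : Act) (p : Proc Act) : Step (Proc.pre a p) a p
  | plusL : ∀ {p₁ p₂ p' : Proc Act} {a : Act},
      Step p₁ a p' → Step (Proc.plus p₁ p₂) a p'
  | plusR : ∀ {p₁ p₂ p' : Proc Act} {a : Act},
      Step p₂ a p' → Step (Proc.plus p₁ p₂) a p'

/-- HML formulas in negation normal form:
`φ ::= tt | ff | φ∧φ | φ∨φ | ⟨a⟩φ | [a]φ`. -/
inductive HML (Act : Type) : Type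
  | tt : HML Act
  | ff : HML Act
  | conj : HML Act → HML Act → HML Act
  | disj : HML Act → HML Act → HML Act
  | dia : Act → HML Act → HML Act
  | box : Act → HML Act → HML Act

/-- The satisfaction relation `p ⊨ φ`. -/
def Sat {Act : Type} : Proc Act → HML Act → Prop
  | _, HML.tt => True
  | _, HML.ff => False
  | p, HML.conj φ ψ => Sat p φ ∧ Sat p ψ
  | p, HML.disj φ ψ => Sat p φ ∨ Sat p ψ
  | p, HML.dia a φ => ∃ p', Step p a p' ∧ Sat p' φ
  | p, HML.box a φ => ∀ p', Step p a p' → Sat p' φ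

/-- `φ` entails `ψ` iff every process satisfying `φ` satisfies `ψ`. -/
def Entails {Act : Type} (φ ψ : HML Act) : Prop :=
  ∀ p : Proc Act, Sat p φ → Sat p ψ

/-- `R` is a simulation relation. -/
def IsSimulation {Act : Type} (R : Proc Act → Proc Act → Prop) : Prop :=
  ∀ p q, R p q → ∀ a p', Step p a p' → ∃ q', Step q a q' ∧ R p' q'

/-- The simulation preorder `≲_S`: the largest simulation. -/
def Sim {Act : Type} (p q : Proc Act) : Prop :=
  ∃ R, IsSimulation R ∧ R p q

/-- The set `I(p)` of initial actions of a process. -/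
def initials {Act : Type} (p : Proc Act) : Set Act :=
  {a | ∃ p', Step p a p'}

/-- The depth of a process: the length of a longest trace. -/
def depth {Act : Type} : Proc Act → ℕ
  | Proc.nil => 0
  | Proc.pre _ p => depth p + 1
  | Proc.plus p q => max (depth p) (depth q)

/-- The modal depth of a formula: the maximal nesting of modal operators. -/
def md {Act : Type} : HML Act → ℕ
  | HML.tt => 0
  | HML.ff => 0
  | HML.conj φ ψ => max (md φ) (md ψ)
  | HML.disj φ ψ => max (md φ) (md ψ)
  | HML.dia _ φ => md φ + 1
  | HML.box _ φ => md φ + 1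


def trunc {Act : Type} : ℕ → Proc Act → Proc Act
  | 0, _ => Proc.nil
  | _+1, Proc.nil => Proc.nil
  | n+1, Proc.pre a p => Proc.pre a (trunc n p)
  | n+1, Proc.plus p q => Proc.plus (trunc (n+1) p) (trunc (n+1) q)

lemma step_trunc {Act : Type} {n : ℕ} {p : Proc Act} {a : Act} {p' : Proc Act} :
    Step (trunc (n+1) p) a p' ↔ ∃ q', Step p a q' ∧ p' = trunc n q' := by
  induction p with
  | nil =>
    simp only [trunc]
    constructor
    · intro h; cases h
    · rintro ⟨q', hq, _⟩; cases hq
  | pre b q ih =>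
    simp only [trunc]
    constructor
    · intro h; cases h; exact ⟨q, Step.pre _ _, rfl⟩
    · rintro ⟨q', hq, rfl⟩; cases hq; exact Step.pre _ _
  | plus q r ihq ihr =>
    simp only [trunc]
    constructor
    · intro h
      cases h with
      | plusL h => obtain ⟨q', hq, rfl⟩ := ihq.mp h; exact ⟨q', Step.plusL hq, rfl⟩
      | plusR h => obtain ⟨q', hq, rfl⟩ := ihr.mp h; exact ⟨q', Step.plusR hq, rfl⟩
    · rintro ⟨q', hq, rfl⟩
      cases hq with
      | plusL h => exact Step.plusL (ihq.mpr ⟨_, h, rfl⟩)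
      | plusR h => exact Step.plusR (ihr.mpr ⟨_, h, rfl⟩)

lemma depth_trunc {Act : Type} : ∀ (n : ℕ) (p : Proc Act), depth (trunc n p) ≤ n
  | 0, _ => by simp [trunc, depth]
  | _+1, Proc.nil => Nat.zero_le _
  | n+1, Proc.pre a p => by
      simpa [trunc, depth] using depth_trunc n p
  | n+1, Proc.plus p q => by
      simp only [trunc, depth, max_le_iff]
      exact ⟨depth_trunc (n+1) p, depth_trunc (n+1) q⟩

lemma sat_trunc {Act : Type} :
    ∀ (φ : HML Act) (n : ℕ) (p : Proc Act), md φ ≤ n → Sat p φ → Sat (trunc n p) φ := by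
  intro φ
  induction φ with
  | tt => intro n p _ _; trivial
  | ff => intro n p _ h; exact h.elim
  | conj ψ χ ihψ ihχ =>
    intro n p hmd h
    simp only [md, max_le_iff] at hmd
    exact ⟨ihψ n p hmd.1 h.1, ihχ n p hmd.2 h.2⟩
  | disj ψ χ ihψ ihχ =>
    intro n p hmd h
    simp only [md, max_le_iff] at hmd
    cases h with
    | inl h => exact Or.inl (ihψ n p hmd.1 h)
    | inr h => exact Or.inr (ihχ n p hmd.2 h)
  | dia a ψ ih =>
    intro n p hmd h
    obtain ⟨p', hs, hsat⟩ := h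
    simp only [md] at hmd
    obtain ⟨m, rfl⟩ : ∃ m, n = m + 1 := ⟨n - 1, by omega⟩
    exact ⟨trunc m p', step_trunc.mpr ⟨p', hs, rfl⟩, ih m p' (by omega) hsat⟩
  | box a ψ ih =>
    intro n p hmd h
    cases n with
    | zero => intro p' hs; simp only [trunc] at hs; cases hs
    | succ m =>
      intro p' hs
      obtain ⟨q', hq, rfl⟩ := step_trunc.mp hs
      simp only [md] at hmd
      exact ih m q' (by omega) (h q' hq)

lemma depth_step {Act : Type} {p : Proc Act} {a : Act} {p' : Proc Act}
    (h : Step p a p') : depth p' + 1 ≤ depth p := by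
  induction h with
  | pre => simp [depth]
  | plusL _ ih => simp only [depth]; omega
  | plusR _ ih => simp only [depth]; omega

lemma exists_step_depth {Act : Type} :
    ∀ (p : Proc Act), 0 < depth p → ∃ a p', Step p a p' ∧ depth p = depth p' + 1 := by
  intro p
  induction p with
  | nil => intro h; simp [depth] at h
  | pre a q _ => intro _; exact ⟨a, q, Step.pre a q, rfl⟩
  | plus q r ihq ihr =>
    intro h
    simp only [depth] at h ⊢
    rcases le_total (depth q) (depth r) with hle | hle
    · obtain ⟨a, p', hs, hd⟩ := ihr (by omega)
      exact ⟨a, p', Step.plusR hs, by omega⟩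
    · obtain ⟨a, p', hs, hd⟩ := ihq (by omega)
      exact ⟨a, p', Step.plusL hs, by omega⟩

lemma sim_depth_le_aux {Act : Type} : ∀ (n : ℕ) (p q : Proc Act), depth p = n → Sim p q → depth p ≤ depth q := by
  intro n
  induction n using Nat.strong_induction_on with
  | _ n ih =>
    intro p q hn hsim
    rcases Nat.eq_zero_or_pos (depth p) with h0 | h0
    · omega
    · obtain ⟨a, p', hs, hd⟩ := exists_step_depth p h0
      obtain ⟨R, hR, hpq⟩ := hsim
      obtain ⟨q', hq, hR'⟩ := hR p q hpq a p' hs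
      have h1 : depth p' ≤ depth q' := ih (depth p') (by omega) p' q' rfl ⟨R, hR, hR'⟩
      have h2 := depth_step hq
      omega

lemma sim_depth_le {Act : Type} {p q : Proc Act} (h : Sim p q) : depth p ≤ depth q :=
  sim_depth_le_aux (depth p) p q rfl h

/-- Let `φ` be an HML formula and `p₁ ⊨ φ`, `p₂ ⊨ φ`. If every two processes
satisfying `φ` are simulation equivalent, then
`depth(p₁) = depth(p₂) ≤ md(φ)`. -/
theorem depth_eq_le_md {Act : Type} [Fintype Act] [Nonempty Act]
    (φ : HML Act) (p₁ p₂ : Proc Act) (h₁ : Sat p₁ φ) (h₂ : Sat p₂ φ)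
    (hall : ∀ p q : Proc Act, Sat p φ → Sat q φ → (Sim p q ∧ Sim q p)) :
    depth p₁ = depth p₂ ∧ depth p₁ ≤ md φ := by
  have hd12 : depth p₁ = depth p₂ := by
    obtain ⟨hs1, hs2⟩ := hall p₁ p₂ h₁ h₂
    exact le_antisymm (sim_depth_le hs1) (sim_depth_le hs2)
  refine ⟨hd12, ?_⟩
  have hq : Sat (trunc (md φ) p₁) φ := sat_trunc φ (md φ) p₁ le_rfl h₁
  obtain ⟨hs1, _⟩ := hall p₁ (trunc (md φ) p₁) h₁ hq
  exact le_trans (sim_depth_le hs1) (depth_trunc (md φ) p₁)
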